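/- Let u ∈ C²[t_j, t_{j+1}] with |u''| ≤ M₂, and let u_{t,j} = (u(t_{j+1}) - u(t_j))/τ. Then |(1/Γ(1-α)) ∫_{t_j}^{t_{j+1/2}} (u'(η) - u_{t,j}) (t_{j+1/2} - η)^{-α} dη| ≤ (2^α M₂ / (4 Γ(2-α))) τ^{2-α}. -/

import Mathlib

open Real Set

lemma aux_lip (u : ℝ → ℝ) (hu : ContDiff ℝ 2 u) (M₂ a b : ℝ)
    (hM : ∀ t ∈ Icc a b, |iteratedDeriv 2 u t| ≤ M₂) :
    ∀ x ∈ Icc a b, ∀ y ∈ Icc a b, |deriv u y - deriv u x| ≤ M₂ * |y - x| := by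
  have hM' : ∀ t ∈ Icc a b, |deriv (deriv u) t| ≤ M₂ := by
    intro t ht
    have := hM t ht
    rwa [show (2:ℕ) = 1 + 1 from rfl, iteratedDeriv_succ, iteratedDeriv_one] at this
  have hu' : ContDiff ℝ (1+1) u := by rw [one_add_one_eq_two]; exact hu
  have hd2 : ContDiff ℝ 1 (deriv u) := (contDiff_succ_iff_deriv.mp hu').2.2
  have hd2' : Differentiable ℝ (deriv u) := hd2.differentiable one_ne_zero
  have hd2'' : ContDiff ℝ (0+1) (deriv u) := by norm_num; exact hd2
  have hcont : Continuous (deriv (deriv u)) :=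
    ((contDiff_succ_iff_deriv.mp hd2'').2.2).continuous
  intro x hx y hy
  have heq : ∫ s in x..y, deriv (deriv u) s = deriv u y - deriv u x :=
    intervalIntegral.integral_deriv_eq_sub (fun t _ => hd2' t)
      (hcont.intervalIntegrable _ _)
  rw [← heq, ← Real.norm_eq_abs]
  have : ∀ t ∈ Set.uIoc x y, ‖deriv (deriv u) t‖ ≤ M₂ := by
    intro t ht
    have hsub : Set.uIoc x y ⊆ Icc a b := by
      refine subset_trans Set.uIoc_subset_uIcc ?_
      exact Set.uIcc_subset_Icc hx hy
    exact hM' t (hsub ht)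
  simpa using intervalIntegral.norm_integral_le_of_norm_le_const this

lemma aux_pt (u : ℝ → ℝ) (hu : ContDiff ℝ 2 u) (M₂ a b : ℝ) (hab : a < b)
    (hM : ∀ t ∈ Icc a b, |iteratedDeriv 2 u t| ≤ M₂) :
    ∀ η ∈ Icc a b, |deriv u η - (u b - u a) / (b - a)| ≤ M₂ * (b - a) / 2 := by
  have hd1 : Differentiable ℝ u := hu.differentiable (by norm_num)
  have hu' : ContDiff ℝ (1+1) u := by rw [one_add_one_eq_two]; exact hu
  have hd2 : ContDiff ℝ 1 (deriv u) := (contDiff_succ_iff_deriv.mp hu').2.2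
  have hcont : Continuous (deriv u) := hd2.continuous
  have hLip := aux_lip u hu M₂ a b hM
  have hM0 : 0 ≤ M₂ := le_trans (abs_nonneg _) (hM a ⟨le_refl a, hab.le⟩)
  intro η hη
  have hfa : ∫ s in a..η, deriv u s = u η - u a :=
    intervalIntegral.integral_deriv_eq_sub (fun t _ => hd1 t)
      (hcont.intervalIntegrable _ _)
  have hfb : ∫ s in η..b, deriv u s = u b - u η :=
    intervalIntegral.integral_deriv_eq_sub (fun t _ => hd1 t)
      (hcont.intervalIntegrable _ _)
  -- key identity
  have key : (b - a) * deriv u η - (u b - u a)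
      = (∫ s in a..η, (deriv u η - deriv u s))
        + ∫ s in η..b, (deriv u η - deriv u s) := by
    rw [intervalIntegral.integral_sub (intervalIntegrable_const)
      (hcont.intervalIntegrable _ _),
      intervalIntegral.integral_sub (intervalIntegrable_const)
      (hcont.intervalIntegrable _ _), hfa, hfb]
    simp [intervalIntegral.integral_const, smul_eq_mul]
    ring
  -- bound each piece
  have hb1 : |∫ s in a..η, (deriv u η - deriv u s)| ≤ M₂ * (η - a) ^ 2 / 2 := by
    have hbound : ∀ᵐ t ∂(MeasureTheory.volume.restrict (Set.uIoc a η)),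
        ‖deriv u η - deriv u t‖ ≤ M₂ * (η - t) := by
      refine Filter.eventually_of_mem
        (MeasureTheory.self_mem_ae_restrict measurableSet_uIoc) ?_
      intro t ht
      rw [Set.uIoc_of_le hη.1] at ht
      have h1 : t ∈ Icc a b := ⟨ht.1.le, ht.2.trans hη.2⟩
      have := hLip t h1 η hη
      rw [abs_of_nonneg (by linarith [ht.2] : (0:ℝ) ≤ η - t)] at this
      simpa [Real.norm_eq_abs] using this
    have hgint : IntervalIntegrable (fun t => M₂ * (η - t)) MeasureTheory.volume a η :=
      (continuous_const.mul (continuous_const.sub continuous_id)).intervalIntegrable _ _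
    have := intervalIntegral.norm_integral_le_abs_of_norm_le hbound hgint
    have hval : ∫ t in a..η, M₂ * (η - t) = M₂ * (η - a) ^ 2 / 2 := by
      rw [intervalIntegral.integral_const_mul,
        intervalIntegral.integral_comp_sub_left (fun x => x) η]
      rw [integral_id]
      ring
    rw [hval] at this
    rw [← Real.norm_eq_abs]
    refine this.trans ?_
    rw [abs_of_nonneg (by positivity)]
  have hb2 : |∫ s in η..b, (deriv u η - deriv u s)| ≤ M₂ * (b - η) ^ 2 / 2 := by
    have hbound : ∀ᵐ t ∂(MeasureTheory.volume.restrict (Set.uIoc η b)),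
        ‖deriv u η - deriv u t‖ ≤ M₂ * (t - η) := by
      refine Filter.eventually_of_mem
        (MeasureTheory.self_mem_ae_restrict measurableSet_uIoc) ?_
      intro t ht
      rw [Set.uIoc_of_le hη.2] at ht
      have h1 : t ∈ Icc a b := ⟨hη.1.trans ht.1.le, ht.2⟩
      have h2 := hLip t h1 η hη
      have h3 : |η - t| = t - η := by
        rw [abs_sub_comm]; exact abs_of_nonneg (by linarith [ht.1])
      rw [Real.norm_eq_abs, abs_sub_comm]
      calc |deriv u t - deriv u η| = |deriv u η - deriv u t| := abs_sub_comm _ _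
        _ ≤ M₂ * |η - t| := h2
        _ = M₂ * (t - η) := by rw [h3]
    have hgint : IntervalIntegrable (fun t => M₂ * (t - η)) MeasureTheory.volume η b :=
      (continuous_const.mul (continuous_id.sub continuous_const)).intervalIntegrable _ _
    have := intervalIntegral.norm_integral_le_abs_of_norm_le hbound hgint
    have hval : ∫ t in η..b, M₂ * (t - η) = M₂ * (b - η) ^ 2 / 2 := by
      rw [intervalIntegral.integral_const_mul]
      have : ∫ t in η..b, (t - η) = (b - η) ^ 2 / 2 := by
        rw [intervalIntegral.integral_comp_sub_right (fun x => x) η]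
        rw [integral_id]
        ring
      rw [this]; ring
    rw [hval] at this
    rw [← Real.norm_eq_abs]
    refine this.trans ?_
    rw [abs_of_nonneg (by positivity)]
  -- combine
  have hcomb : |(b - a) * deriv u η - (u b - u a)| ≤ M₂ * (b - a) ^ 2 / 2 := by
    rw [key]
    refine (abs_add_le _ _).trans ?_
    have hsq : (η - a) ^ 2 + (b - η) ^ 2 ≤ (b - a) ^ 2 := by
      nlinarith [hη.1, hη.2]
    nlinarith [hb1, hb2]
  have hba : 0 < b - a := by linarith
  have habs : |deriv u η - (u b - u a) / (b - a)| * (b - a)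
      = |(b - a) * deriv u η - (u b - u a)| := by
    rw [← abs_of_pos hba, ← abs_mul, abs_of_pos hba]
    congr 1
    field_simp
  have h5 : |deriv u η - (u b - u a) / (b - a)| * (b - a) ≤ (M₂ * (b - a) / 2) * (b - a) := by
    rw [habs]; nlinarith [hcomb]
  exact le_of_mul_le_mul_right h5 hba

/-- Bound on the near-endpoint error term R_j^{j+1/2} of Lemma 2:
|(1/Γ(1-α)) ∫_{t_j}^{t_{j+1/2}} (u'(η) - u_{t,j}) (t_{j+1/2}-η)^{-α} dη|
  ≤ (2^α M₂ / (4 Γ(2-α))) τ^{2-α}. -/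
theorem stmt_10 (α τ : ℝ) (hα0 : 0 < α) (hα1 : α < 1) (hτ : 0 < τ)
    (j : ℕ) (u : ℝ → ℝ) (hu : ContDiff ℝ 2 u) (M₂ : ℝ)
    (hM : ∀ t ∈ Icc ((j : ℝ) * τ) (((j : ℝ) + 1) * τ), |iteratedDeriv 2 u t| ≤ M₂) :
    |(1 / Real.Gamma (1 - α))
        * ∫ η in ((j : ℝ) * τ)..(((j : ℝ) + 1/2) * τ),
            (deriv u η - (u (((j : ℝ) + 1) * τ) - u ((j : ℝ) * τ)) / τ)
              * (((j : ℝ) + 1/2) * τ - η) ^ (-α)|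
      ≤ (2 : ℝ) ^ α * M₂ / (4 * Real.Gamma (2 - α)) * τ ^ (2 - α) := by
  set a : ℝ := (j : ℝ) * τ with ha
  set b : ℝ := ((j : ℝ) + 1) * τ with hb
  set m : ℝ := ((j : ℝ) + 1/2) * τ with hm
  have hab : a < b := by rw [ha, hb]; nlinarith
  have hba : b - a = τ := by rw [ha, hb]; ring
  have hma : m - a = τ / 2 := by rw [ha, hm]; ring
  have ham : a < m := by nlinarith [hma]
  have hmb : m < b := by nlinarith [hba, hma]
  have hM0 : 0 ≤ M₂ := le_trans (abs_nonneg _) (hM a ⟨le_refl a, hab.le⟩)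
  have hpt := aux_pt u hu M₂ a b hab hM
  have hΓ1 : 0 < Real.Gamma (1 - α) := Real.Gamma_pos_of_pos (by linarith)
  -- integrability of the bound function
  have hgint : IntervalIntegrable (fun η => M₂ * τ / 2 * (m - η) ^ (-α))
      MeasureTheory.volume a m := by
    apply IntervalIntegrable.const_mul
    have h0 : IntervalIntegrable (fun x : ℝ => x ^ (-α)) MeasureTheory.volume 0 (m - a) :=
      intervalIntegral.intervalIntegrable_rpow' (by linarith)
    have := (h0.comp_sub_left m).symm
    simpa using this
  -- pointwise bound
  have hbound : ∀ᵐ t ∂(MeasureTheory.volume.restrict (Set.uIoc a m)),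
      ‖(deriv u t - (u b - u a) / τ) * (m - t) ^ (-α)‖
        ≤ M₂ * τ / 2 * (m - t) ^ (-α) := by
    refine Filter.eventually_of_mem
      (MeasureTheory.self_mem_ae_restrict measurableSet_uIoc) ?_
    intro t ht
    rw [Set.uIoc_of_le ham.le] at ht
    have htc : t ∈ Icc a b := ⟨ht.1.le, ht.2.trans hmb.le⟩
    have h1 := hpt t htc
    rw [hba] at h1
    have h2 : (0:ℝ) ≤ (m - t) ^ (-α) := Real.rpow_nonneg (by linarith [ht.2]) _
    rw [Real.norm_eq_abs, abs_mul, abs_of_nonneg h2]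
    exact mul_le_mul_of_nonneg_right h1 h2
  have hmain := intervalIntegral.norm_integral_le_abs_of_norm_le hbound hgint
  -- value of the bound integral
  have hval : ∫ t in a..m, M₂ * τ / 2 * (m - t) ^ (-α)
      = M₂ * τ / 2 * ((τ/2) ^ (1-α) / (1-α)) := by
    rw [intervalIntegral.integral_const_mul,
      intervalIntegral.integral_comp_sub_left (fun x => x ^ (-α)) m]
    rw [sub_self, hma]
    rw [integral_rpow (Or.inl (by linarith))]
    rw [Real.zero_rpow (by linarith : -α + 1 ≠ 0)]
    rw [show -α + 1 = 1 - α by ring]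
    ring
  rw [hval] at hmain
  have hvnn : (0:ℝ) ≤ M₂ * τ / 2 * ((τ/2) ^ (1-α) / (1-α)) := by
    have : (0:ℝ) ≤ (τ/2) ^ (1-α) := Real.rpow_nonneg (by linarith) _
    have h1α : (0:ℝ) < 1 - α := by linarith
    positivity
  rw [abs_of_nonneg hvnn] at hmain
  rw [abs_mul, abs_of_pos (by positivity : (0:ℝ) < 1 / Real.Gamma (1-α))]
  have step : 1 / Real.Gamma (1-α)
      * |∫ η in a..m, (deriv u η - (u b - u a) / τ) * (m - η) ^ (-α)|
      ≤ 1 / Real.Gamma (1-α) * (M₂ * τ / 2 * ((τ/2) ^ (1-α) / (1-α))) := by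
    apply mul_le_mul_of_nonneg_left _ (by positivity)
    simpa [Real.norm_eq_abs] using hmain
  refine step.trans ?_
  -- final arithmetic: equality
  have hΓ2 : Real.Gamma (2 - α) = (1 - α) * Real.Gamma (1 - α) := by
    have := Real.Gamma_add_one (show (1:ℝ) - α ≠ 0 by linarith)
    rw [show (1:ℝ) - α + 1 = 2 - α by ring] at this
    exact this
  have h2ne : ((2:ℝ)) ^ (1-α) ≠ 0 := by positivity
  have hd : (τ/2) ^ (1-α) = τ ^ (1-α) / 2 ^ (1-α) :=
    Real.div_rpow hτ.le (by norm_num : (0:ℝ) ≤ 2) (1-α)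
  have hτ2 : τ ^ ((2:ℝ)-α) = τ * τ ^ (1-α) := by
    rw [show (2:ℝ)-α = 1+(1-α) by ring, Real.rpow_add hτ, Real.rpow_one]
  have h22 : (2:ℝ)^α * (2:ℝ)^(1-α) = 2 := by
    rw [← Real.rpow_add (by norm_num)]; norm_num
  have hΓne : Real.Gamma (1-α) ≠ 0 := hΓ1.ne'
  have h1αne : (1:ℝ) - α ≠ 0 := by linarith
  rw [hΓ2, hd, hτ2]
  rw [le_iff_lt_or_eq]; right
  field_simp
  linear_combination (-2 * M₂) * h22
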